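/- For every τ > 0, r ≥ 1 and z ∈ ℝ, the marginal density of z under the alternative equals the null density times a confluent hypergeometric factor: ∫_ℝ φ(z−λ) j(λ|τ²,r) dλ = φ(z) · (1+τ²)^{−(r+1/2)} · ₁F₁(r+1/2, 1/2; τ²z²/(2(1+τ²))). Equivalently, the two-sided z Bayes factor satisfies BF₁₀(z|τ²,r) = (1+τ²)^{−(r+1/2)} ₁F₁(r+1/2, 1/2; τ²z²/(2(1+τ²))). -/

import Mathlib

open Real MeasureTheory Filter

/-- Rising factorial (Pochhammer symbol) `(a)_k`. -/
noncomputable def risingFac (a : ℝ) (k : ℕ) : ℝ := (ascPochhammer ℝ k).eval a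

/-- Confluent hypergeometric function `₁F₁(a, b; x)`. -/
noncomputable def oneF1 (a b x : ℝ) : ℝ :=
  ∑' k : ℕ, (risingFac a k / risingFac b k) * x ^ k / (Nat.factorial k : ℝ)

/-- Standard normal density. -/
noncomputable def stdNormalPdf (x : ℝ) : ℝ :=
  (Real.sqrt (2 * Real.pi))⁻¹ * Real.exp (-x ^ 2 / 2)

/-- Normal-moment density `j(λ | τ², r)` of order `r`. -/
noncomputable def normalMomentPdf (τ r l : ℝ) : ℝ :=
  (l ^ 2) ^ r / ((2 * τ ^ 2) ^ (r + 1 / 2) * Real.Gamma (r + 1 / 2)) *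
    Real.exp (-l ^ 2 / (2 * τ ^ 2))

section Aux
open Set ENNReal



lemma real_exp_tsum (x : ℝ) : Real.exp x = ∑' n : ℕ, x ^ n / (Nat.factorial n : ℝ) := by
  rw [Real.exp_eq_exp_ℝ, NormedSpace.exp_eq_tsum_div]

lemma risingFac_zero (a : ℝ) : risingFac a 0 = 1 := by simp [risingFac]

lemma risingFac_succ (a : ℝ) (k : ℕ) : risingFac a (k+1) = risingFac a k * (a + k) := by
  simp [risingFac, ascPochhammer_succ_eval]

lemma risingFac_pos {a : ℝ} (ha : 0 < a) (k : ℕ) : 0 < risingFac a k := by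
  induction k with
  | zero => simp [risingFac_zero]
  | succ k ih => rw [risingFac_succ]; positivity

lemma Gamma_add_nat' {x : ℝ} (hx : 0 < x) (k : ℕ) :
    Real.Gamma (x + k) = Real.Gamma x * risingFac x k := by
  induction k with
  | zero => simp [risingFac_zero]
  | succ k ih =>
    have hxk : (0:ℝ) < x + k := by positivity
    have h : x + (k+1 : ℕ) = (x + k) + 1 := by push_cast; ring
    rw [h, Real.Gamma_add_one hxk.ne', ih, risingFac_succ]; ring

lemma risingFac_half (k : ℕ) :
    risingFac (1/2) k = (Nat.factorial (2*k) : ℝ) / (4 ^ k * (Nat.factorial k : ℝ)) := by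
  induction k with
  | zero => simp [risingFac_zero]
  | succ k ih =>
    rw [risingFac_succ, ih]
    have h1 : 2 * (k+1) = (2*k+1) + 1 := by ring
    rw [h1, Nat.factorial_succ, Nat.factorial_succ, Nat.factorial_succ]
    push_cast
    have h4 : (4:ℝ) ^ (k+1) = 4 * 4 ^ k := by ring
    rw [h4]
    field_simp
    ring

lemma integrableOn_abs_rpow (c s : ℝ) (hc : 0 < c) (hs : -1 < s) :
    IntegrableOn (fun x : ℝ => |x| ^ s * Real.exp (-c * x ^ 2)) (Ioi 0) := by
  refine (integrableOn_rpow_mul_exp_neg_mul_sq hc hs).congr_fun (fun x hx => ?_) measurableSet_Ioi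
  rw [abs_of_pos hx]

lemma integrable_abs_rpow (c s : ℝ) (hc : 0 < c) (hs : -1 < s) :
    Integrable (fun x : ℝ => |x| ^ s * Real.exp (-c * x ^ 2)) := by
  rw [← integrableOn_univ, ← @Iic_union_Ioi _ _ (0 : ℝ), integrableOn_union]
  refine ⟨?_, integrableOn_abs_rpow c s hc hs⟩
  rw [← (Measure.measurePreserving_neg (volume : Measure ℝ)).integrableOn_comp_preimage
      (Homeomorph.neg ℝ).measurableEmbedding]
  simp only [Function.comp_def, abs_neg, neg_sq, neg_preimage, neg_Iic, neg_zero]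
  exact Iff.mpr integrableOn_Ici_iff_integrableOn_Ioi (integrableOn_abs_rpow c s hc hs)

lemma integral_abs_rpow (c s : ℝ) (hc : 0 < c) (hs : -1 < s) :
    ∫ x : ℝ, |x| ^ s * Real.exp (-c * x ^ 2)
      = c ^ (-(s + 1) / 2) * Real.Gamma ((s + 1) / 2) := by
  have h1 : ∀ x : ℝ, |x| ^ s * Real.exp (-c * x ^ 2)
      = (fun t : ℝ => t ^ s * Real.exp (-c * t ^ 2)) |x| := by
    intro x; simp [sq_abs]
  simp_rw [h1]
  rw [integral_comp_abs (f := fun t : ℝ => t ^ s * Real.exp (-c * t ^ 2))]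
  have h2 : ∀ x ∈ Ioi (0:ℝ), x ^ s * Real.exp (-c * x ^ 2)
      = x ^ s * Real.exp (-c * x ^ (2:ℝ)) := by
    intro x _; rw [Real.rpow_two]
  rw [setIntegral_congr_fun measurableSet_Ioi h2,
    integral_rpow_mul_exp_neg_mul_rpow (by norm_num : (0:ℝ) < 2) hs hc]
  ring

lemma abs_rpow_eq (r : ℝ) (l : ℝ) : (l^2)^r = |l| ^ (2*r) := by
  rw [← sq_abs, ← Real.rpow_natCast |l| 2, ← Real.rpow_mul (abs_nonneg l)]
  norm_num

lemma abs_rpow_pow_eq {r : ℝ} (hr : 1 ≤ r) (n : ℕ) (l : ℝ) :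
    (l^2)^r * |l|^n = |l| ^ (2*r + n) := by
  rw [← sq_abs, ← Real.rpow_natCast |l| 2, ← Real.rpow_mul (abs_nonneg l),
    ← Real.rpow_natCast |l| n, ← Real.rpow_add' (abs_nonneg l) (by positivity)]
  norm_num

set_option maxHeartbeats 1000000 in
/-- The core Gaussian-moment series identity. -/
lemma core_integral {r c : ℝ} (hr : 1 ≤ r) (hc : 0 < c) (b : ℝ) :
    ∫ l : ℝ, (l ^ 2) ^ r * (Real.exp (b * l) * Real.exp (-c * l ^ 2))
      = Real.Gamma (r + 1/2) * c ^ (-(r + 1/2)) *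
          ∑' k : ℕ, (risingFac (r + 1/2) k / risingFac (1/2) k) *
            (b^2 / (4*c)) ^ k / (Nat.factorial k : ℝ) := by
  set f : ℕ → ℝ → ℝ :=
    fun n l => (l^2)^r * ((b*l)^n / (Nat.factorial n : ℝ)) * Real.exp (-c*l^2) with hf_def
  have h_meas : ∀ n, AEStronglyMeasurable (f n) volume := by
    intro n
    exact (by fun_prop :
      Measurable (fun l : ℝ => (l^2)^r * ((b*l)^n / (Nat.factorial n : ℝ)) *
        Real.exp (-c*l^2))).aestronglyMeasurable
  -- pointwise series
  have h_sum : ∀ l : ℝ, ∑' n, f n l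
      = (l ^ 2) ^ r * (Real.exp (b * l) * Real.exp (-c * l ^ 2)) := by
    intro l
    rw [real_exp_tsum (b*l), ← _root_.tsum_mul_right, ← _root_.tsum_mul_left]
    exact tsum_congr fun n => by simp [hf_def]; ring
  -- norm of f n
  have h_norm : ∀ n, ∀ l : ℝ, ‖f n l‖
      = (l^2)^r * (|b*l|^n / (Nat.factorial n : ℝ)) * Real.exp (-c*l^2) := by
    intro n l
    have h0 : (0:ℝ) ≤ (l^2)^r := Real.rpow_nonneg (sq_nonneg l) r
    rw [Real.norm_eq_abs, abs_mul, abs_mul, abs_of_nonneg h0,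
      abs_of_nonneg (Real.exp_pos _).le, abs_div, abs_pow,
      abs_of_nonneg (by positivity : (0:ℝ) ≤ (Nat.factorial n : ℝ))]
  -- dominating function
  set S : ℝ → ℝ := fun l => (l^2)^r * Real.exp |b*l| * Real.exp (-c*l^2) with hS_def
  have hS_sum : ∀ l : ℝ, ∑' n, ‖f n l‖ = S l := by
    intro l
    show _ = (l^2)^r * Real.exp |b*l| * Real.exp (-c*l^2)
    simp_rw [h_norm, mul_assoc]
    rw [_root_.tsum_mul_left, _root_.tsum_mul_right, ← real_exp_tsum]
  have hS_int : Integrable S := by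
    have hbd := integrable_abs_rpow (c/2) (2*r) (by positivity) (by linarith)
    refine Integrable.mono' (hbd.const_mul (Real.exp (b^2/(2*c)))) ?_ ?_
    · exact (by fun_prop : Measurable S).aestronglyMeasurable
    · filter_upwards with l
      have h0 : (0:ℝ) ≤ (l^2)^r := Real.rpow_nonneg (sq_nonneg l) r
      have hSnn : 0 ≤ S l := by rw [hS_def]; positivity
      rw [Real.norm_eq_abs, abs_of_nonneg hSnn, hS_def]
      have key : |b*l| + (-c*l^2) ≤ b^2/(2*c) + (-(c/2)*l^2) := by
        rw [abs_mul]
        have h2 : 0 ≤ b^2 + c^2*l^2 - 2*c*(|b| * |l|) := by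
          nlinarith [sq_nonneg (|b| - c*|l|), sq_abs l, sq_abs b]
        have keyq : b^2/(2*c) + (-(c/2)*l^2) - (|b| * |l| + (-c*l^2))
            = (b^2 + c^2*l^2 - 2*c*(|b| * |l|))/(2*c) := by field_simp; ring
        have := div_nonneg h2 (by positivity : (0:ℝ) ≤ 2*c)
        linarith
      calc (l^2)^r * Real.exp |b*l| * Real.exp (-c*l^2)
          = (l^2)^r * Real.exp (|b*l| + (-c*l^2)) := by rw [Real.exp_add]; ring
        _ ≤ (l^2)^r * Real.exp (b^2/(2*c) + (-(c/2)*l^2)) := by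
            exact mul_le_mul_of_nonneg_left (by exact Real.exp_le_exp.mpr key) h0
        _ = Real.exp (b^2/(2*c)) * (|l| ^ (2*r) * Real.exp (-(c/2)*l^2)) := by
            rw [Real.exp_add, abs_rpow_eq]; ring
  -- finiteness of the lintegral sum
  have hf' : ∑' n, ∫⁻ l, ‖f n l‖₊ ≠ ⊤ := by
    rw [← lintegral_tsum (fun n => (h_meas n).aemeasurable.nnnorm.coe_nnreal_ennreal)]
    have hpt : ∀ l : ℝ, (∑' n, (‖f n l‖₊ : ℝ≥0∞)) = ENNReal.ofReal (S l) := by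
      intro l
      have hsummable : Summable fun n => ‖f n l‖ := by
        simp_rw [h_norm]
        exact (((Real.summable_pow_div_factorial |b*l|).mul_left _).mul_right _)
      calc (∑' n, (‖f n l‖₊ : ℝ≥0∞)) = ∑' n, ENNReal.ofReal ‖f n l‖ := by
            exact tsum_congr fun n => by
              rw [← Real.enorm_eq_ofReal (norm_nonneg _)]; simp; exact (enorm_eq_nnnorm (f n l)).symm
        _ = ENNReal.ofReal (∑' n, ‖f n l‖) :=
            (ENNReal.ofReal_tsum_of_nonneg (fun n => norm_nonneg _) hsummable).symm
        _ = ENNReal.ofReal (S l) := by rw [hS_sum]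
    have hlt : ∫⁻ l, ∑' n, (‖f n l‖₊ : ℝ≥0∞) < ⊤ := by
      calc ∫⁻ l, ∑' n, (‖f n l‖₊ : ℝ≥0∞) = ∫⁻ l, ENNReal.ofReal (S l) :=
            lintegral_congr fun l => hpt l
        _ ≤ ∫⁻ l, (‖S l‖₊ : ℝ≥0∞) := lintegral_mono fun l => Real.ofReal_le_enorm (S l)
        _ < ⊤ := hS_int.2
    exact hlt.ne
  -- integrability of each f n
  have h_int : ∀ n, Integrable (f n) := by
    intro n
    refine Integrable.mono'
      ((integrable_abs_rpow c (2*r + n) hc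
        (by have := Nat.cast_nonneg (α := ℝ) n; linarith)).const_mul
        (|b|^n / (Nat.factorial n : ℝ))) (h_meas n) ?_
    filter_upwards with l
    rw [h_norm]
    have h0 : (0:ℝ) ≤ (l^2)^r := Real.rpow_nonneg (sq_nonneg l) r
    have : (l^2)^r * (|b*l|^n / (Nat.factorial n : ℝ)) * Real.exp (-c*l^2)
        = |b|^n / (Nat.factorial n : ℝ) * (|l| ^ (2*r + (n:ℝ)) * Real.exp (-c*l^2)) := by
      rw [← abs_rpow_pow_eq hr n l, abs_mul, mul_pow]
      ring
    rw [this]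
  -- swap integral and sum
  have h_swap : (∫ l : ℝ, (l ^ 2) ^ r * (Real.exp (b * l) * Real.exp (-c * l ^ 2)))
      = ∑' n, ∫ l, f n l := by
    rw [← integral_tsum h_meas hf']
    exact integral_congr_ae (Eventually.of_forall fun l => (h_sum l).symm)
  -- even integrals
  have F_even : ∀ k : ℕ, ∫ l, f (2*k) l
      = b^(2*k) / (Nat.factorial (2*k) : ℝ) *
        (c ^ (-(r+1/2)) * c ^ (-(k:ℝ)) * (Real.Gamma (r+1/2) * risingFac (r+1/2) k)) := by
    intro k
    have hpt : ∀ l : ℝ, f (2*k) l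
        = b^(2*k) / (Nat.factorial (2*k) : ℝ) * (|l| ^ (2*r + ((2*k : ℕ):ℝ)) * Real.exp (-c * l^2)) := by
      intro l
      have hl2k : l^(2*k) = |l|^(2*k) := ((even_two_mul k).pow_abs l).symm
      have h1 : (l^2)^r * |l|^(2*k) = |l| ^ (2*r + ((2*k:ℕ):ℝ)) := abs_rpow_pow_eq hr (2*k) l
      calc f (2*k) l = (l^2)^r * ((b*l)^(2*k) / (Nat.factorial (2*k):ℝ)) * Real.exp (-c*l^2) := rfl
        _ = b^(2*k) / (Nat.factorial (2*k):ℝ) * (((l^2)^r * |l|^(2*k)) * Real.exp (-c*l^2)) := by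
            rw [mul_pow, hl2k]; ring
        _ = _ := by rw [h1]
    simp_rw [hpt]
    rw [integral_const_mul, integral_abs_rpow c _ hc
      (by have := Nat.cast_nonneg (α := ℝ) (2*k); linarith)]
    have e1 : -(2*r + ((2*k:ℕ):ℝ) + 1)/2 = -(r+1/2) + -(k:ℝ) := by push_cast; ring
    have e2 : (2*r + ((2*k:ℕ):ℝ) + 1)/2 = (r+1/2) + (k:ℕ) := by push_cast; ring
    rw [e1, e2, Real.rpow_add hc, Gamma_add_nat' (by linarith : (0:ℝ) < r + 1/2) k]
  -- odd integrals vanish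
  have F_odd : ∀ k : ℕ, ∫ l, f (2*k+1) l = 0 := by
    intro k
    have hodd : ∀ l : ℝ, f (2*k+1) (-l) = - f (2*k+1) l := by
      intro l
      have h1 : (b * -l)^(2*k+1) = -((b*l)^(2*k+1)) := by
        rw [mul_neg, Odd.neg_pow ⟨k, rfl⟩]
      calc f (2*k+1) (-l)
          = ((-l)^2)^r * ((b * -l)^(2*k+1) / (Nat.factorial (2*k+1):ℝ)) * Real.exp (-c*(-l)^2) := rfl
        _ = - ((l^2)^r * ((b*l)^(2*k+1) / (Nat.factorial (2*k+1):ℝ)) * Real.exp (-c*l^2)) := by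
            rw [neg_sq, h1]; ring
        _ = - f (2*k+1) l := rfl
    have h2 : ∫ l, f (2*k+1) (-l) = ∫ l, f (2*k+1) l := integral_neg_eq_self _ _
    rw [integral_congr_ae (Eventually.of_forall hodd), integral_neg] at h2
    linarith
  -- summability
  have sumF : Summable (fun n => ∫ l, f n l) := by
    refine Summable.of_norm_bounded (ENNReal.summable_toReal hf') ?_
    intro n
    calc ‖∫ l, f n l‖ ≤ ∫ l, ‖f n l‖ := norm_integral_le_integral_norm _
      _ = (∫⁻ l, (‖f n l‖₊ : ℝ≥0∞)).toReal := integral_norm_eq_lintegral_enorm (h_meas n)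
  have he : Summable fun k => ∫ l, f (2*k) l :=
    sumF.comp_injective (fun a b h => by omega)
  have ho : Summable fun k => ∫ l, f (2*k+1) l :=
    summable_zero.congr fun k => (F_odd k).symm
  rw [h_swap, ← tsum_even_add_odd he ho]
  have hz : ∑' k : ℕ, ∫ l, f (2*k+1) l = 0 := by
    rw [tsum_congr F_odd, tsum_zero]
  rw [hz, add_zero, ← _root_.tsum_mul_left]
  refine tsum_congr fun k => ?_
  rw [F_even, risingFac_half k, Real.rpow_neg hc.le ((k:ℕ):ℝ), Real.rpow_natCast]
  have hfac2k : (Nat.factorial (2*k) : ℝ) ≠ 0 := by positivity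
  have hfack : (Nat.factorial k : ℝ) ≠ 0 := by positivity
  have hck : (c:ℝ)^k ≠ 0 := by positivity
  have hxk : (b^2/(4*c))^k = b^(2*k) / (4^k * c^k) := by
    rw [div_pow, mul_pow, pow_mul]
  rw [hxk]
  field_simp

end Aux

/-- Theorem 2.1: two-sided `z` Bayes factor. -/
theorem two_sided_z_bayes_factor (τ r z : ℝ) (hτ : 0 < τ) (hr : 1 ≤ r) :
    ∫ l : ℝ, stdNormalPdf (z - l) * normalMomentPdf τ r l
      = stdNormalPdf z * (1 + τ ^ 2) ^ (-(r + 1 / 2)) *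
          oneF1 (r + 1 / 2) (1 / 2) (τ ^ 2 * z ^ 2 / (2 * (1 + τ ^ 2))) := by
  have hτ2 : (0:ℝ) < τ^2 := by positivity
  set c : ℝ := (1 + τ^2) / (2*τ^2) with hc_def
  have hc : 0 < c := by rw [hc_def]; positivity
  set C0 : ℝ := (Real.sqrt (2*Real.pi))⁻¹ * Real.exp (-z^2/2) *
    ((2*τ^2) ^ (r+1/2) * Real.Gamma (r+1/2))⁻¹ with hC0_def
  have hpt : ∀ l : ℝ, stdNormalPdf (z - l) * normalMomentPdf τ r l
      = C0 * ((l^2)^r * (Real.exp (z*l) * Real.exp (-c*l^2))) := by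
    intro l
    have hexp : Real.exp (-(z-l)^2/2) * Real.exp (-l^2/(2*τ^2))
        = Real.exp (-z^2/2) * (Real.exp (z*l) * Real.exp (-c*l^2)) := by
      rw [← Real.exp_add, ← Real.exp_add, ← Real.exp_add]
      congr 1
      rw [hc_def]
      field_simp
      ring
    have e1 : stdNormalPdf (z - l) = (Real.sqrt (2*Real.pi))⁻¹ * Real.exp (-(z-l)^2/2) := rfl
    have e2 : normalMomentPdf τ r l = (l^2)^r *
        ((2*τ^2)^(r+1/2) * Real.Gamma (r+1/2))⁻¹ * Real.exp (-l^2/(2*τ^2)) := by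
      rw [normalMomentPdf, div_eq_mul_inv]
    rw [e1, e2, hC0_def]
    linear_combination ((Real.sqrt (2*Real.pi))⁻¹ * (l^2)^r *
      ((2*τ^2)^(r+1/2) * Real.Gamma (r+1/2))⁻¹) * hexp
  rw [integral_congr_ae (Eventually.of_forall hpt), integral_const_mul,
    core_integral hr hc z]
  have harg : z^2/(4*c) = τ^2*z^2/(2*(1+τ^2)) := by
    rw [hc_def]
    have h1 : (1:ℝ) + τ^2 ≠ 0 := by positivity
    field_simp
    ring
  have hΓ : Real.Gamma (r+1/2) ≠ 0 := (Real.Gamma_pos_of_pos (by linarith)).ne'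
  have h2τ : (0:ℝ) < 2*τ^2 := by positivity
  have hmul : (2*τ^2) * c = 1 + τ^2 := by rw [hc_def]; field_simp
  have hpow : (2*τ^2)^(-(r+1/2)) * c^(-(r+1/2)) = (1+τ^2)^(-(r+1/2)) := by
    rw [← Real.mul_rpow h2τ.le hc.le, hmul]
  rw [harg]
  have honeF1 : oneF1 (r + 1/2) (1/2) (τ^2*z^2/(2*(1+τ^2)))
      = ∑' k : ℕ, (risingFac (r + 1/2) k / risingFac (1/2) k) *
          (τ^2*z^2/(2*(1+τ^2))) ^ k / (Nat.factorial k : ℝ) := rfl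
  rw [honeF1]
  have hstd : stdNormalPdf z = (Real.sqrt (2*Real.pi))⁻¹ * Real.exp (-z^2/2) := rfl
  rw [hstd, hC0_def, ← hpow, mul_inv, Real.rpow_neg h2τ.le, Real.rpow_neg hc.le]
  field_simp
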